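/- arXiv:1411.6301 — 2 statements merged into one kernel-verified Lean document; each statement's English description precedes it below -/
import Mathlib

section
/- Let H be a finite abelian group (written multiplicatively) and let q : ℕ → H → ℝ[x,x⁻¹] be such that each q_{j,g} has nonnegative coefficients and Σ_{g∈H} q_{j,g}(1) = 1 for every j. Assume that for all characters α ≠ β of H the series Σ_j (Σ_{(g,h) : α(g·h⁻¹) ≠ β(g·h⁻¹)} q_{j,g}(1)·q_{j,h}(1)) diverges. Then for all characters α ≠ β of H and every j₀ ≥ 0, the l¹ norms ‖∏_{j=j₀}^{j₀+d} (p_{α,j} · p_{β,j})‖₁ tend to 0 as d → ∞, where p_{α,j} := Σ_{g∈H} α(g⁻¹)·q_{j,g} ∈ ℂ[x,x⁻¹]. -/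
open Finsupp Filter

/-- The coefficients of a real Laurent polynomial, i.e. of an element of the
monoid algebra `ℝ[ℤ]`, as a finitely supported function `ℤ →₀ ℝ`. -/
def lcoeff (p : AddMonoidAlgebra ℝ ℤ) : ℤ →₀ ℝ := p.coeff

/-- The coefficients of a complex Laurent polynomial. -/
def lcoeffC (p : AddMonoidAlgebra ℂ ℤ) : ℤ →₀ ℂ := p.coeff

/-- The `l¹` norm of a complex Laurent polynomial. -/
noncomputable def l1C (p : AddMonoidAlgebra ℂ ℤ) : ℝ := (lcoeffC p).sum fun _ c => ‖c‖

/-- Evaluation of a real Laurent polynomial at `x = 1`. -/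
noncomputable def ev1 (p : AddMonoidAlgebra ℝ ℤ) : ℝ := (lcoeff p).sum fun _ c => c

/-- A real Laurent polynomial viewed as a complex Laurent polynomial. -/
noncomputable def toC (p : AddMonoidAlgebra ℝ ℤ) : AddMonoidAlgebra ℂ ℤ :=
  AddMonoidAlgebra.ofCoeff (Finsupp.mapRange (fun r : ℝ => (r : ℂ)) Complex.ofReal_zero (lcoeff p))

lemma l1C_eq (p : AddMonoidAlgebra ℂ ℤ) : l1C p = ∑ a ∈ p.coeff.support, ‖p.coeff a‖ := rfl


lemma l1C_eq_of_subset (p : AddMonoidAlgebra ℂ ℤ) (s : Finset ℤ) (hs : p.coeff.support ⊆ s) :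
    l1C p = ∑ a ∈ s, ‖p.coeff a‖ := by
  rw [l1C_eq]
  exact Finset.sum_subset hs (fun x _ hx => by
    simp [Finsupp.notMem_support_iff.mp hx])


lemma l1C_nonneg (p : AddMonoidAlgebra ℂ ℤ) : 0 ≤ l1C p := by
  rw [l1C_eq]; positivity


lemma l1C_add_le (p q : AddMonoidAlgebra ℂ ℤ) : l1C (p + q) ≤ l1C p + l1C q := by
  rw [l1C_eq_of_subset (p+q) (p.coeff.support ∪ q.coeff.support) (by rw [AddMonoidAlgebra.coeff_add]; exact Finsupp.support_add),
      l1C_eq_of_subset p (p.coeff.support ∪ q.coeff.support) (Finset.subset_union_left),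
      l1C_eq_of_subset q (p.coeff.support ∪ q.coeff.support) (Finset.subset_union_right),
      ← Finset.sum_add_distrib]
  exact Finset.sum_le_sum fun a _ => norm_add_le _ _


lemma l1C_single (a : ℤ) (c : ℂ) : l1C (AddMonoidAlgebra.single a c) ≤ ‖c‖ := by
  rcases eq_or_ne c 0 with h | h
  · simp [h, l1C, lcoeffC]
  · rw [l1C, lcoeffC, AddMonoidAlgebra.coeff_single, Finsupp.sum_single_index] <;> simp


lemma l1C_smul (c : ℂ) (p : AddMonoidAlgebra ℂ ℤ) : l1C (c • p) ≤ ‖c‖ * l1C p := by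
  rw [l1C_eq_of_subset (c • p) p.coeff.support (by rw [AddMonoidAlgebra.coeff_smul]; exact Finsupp.support_smul), l1C_eq,
    Finset.mul_sum]
  exact Finset.sum_le_sum fun a _ => by
    rw [AddMonoidAlgebra.coeff_smul, Finsupp.smul_apply, smul_eq_mul, norm_mul]


lemma l1C_sum_le {ι : Type*} (s : Finset ι) (f : ι → AddMonoidAlgebra ℂ ℤ) :
    l1C (∑ i ∈ s, f i) ≤ ∑ i ∈ s, l1C (f i) := by
  classical
  induction s using Finset.induction with
  | empty => simp [l1C, lcoeffC]
  | insert _ _ h ih =>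
    rw [Finset.sum_insert h, Finset.sum_insert h]
    exact (l1C_add_le _ _).trans (by linarith)


lemma l1C_mul_le (p q : AddMonoidAlgebra ℂ ℤ) : l1C (p * q) ≤ l1C p * l1C q := by
  rw [AddMonoidAlgebra.mul_def]
  refine le_trans ((l1C_sum_le _ _)) ?_
  refine le_trans (Finset.sum_le_sum fun a _ => l1C_sum_le _ _) ?_
  rw [l1C_eq, l1C_eq, Finset.sum_mul_sum]
  exact Finset.sum_le_sum fun a _ => Finset.sum_le_sum fun b _ =>
    (l1C_single _ _).trans (by rw [norm_mul])


lemma l1C_one : l1C 1 = 1 := by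
  rw [show (1 : AddMonoidAlgebra ℂ ℤ) = AddMonoidAlgebra.single 0 1 from rfl]
  rw [l1C, lcoeffC, AddMonoidAlgebra.coeff_single, Finsupp.sum_single_index] <;> simp


lemma l1C_prod_le {ι : Type*} (s : Finset ι) (f : ι → AddMonoidAlgebra ℂ ℤ) :
    l1C (∏ i ∈ s, f i) ≤ ∏ i ∈ s, l1C (f i) := by
  classical
  induction s using Finset.induction with
  | empty => simp [l1C_one]
  | insert _ _ h ih =>
    rw [Finset.prod_insert h, Finset.prod_insert h]
    refine (l1C_mul_le _ _).trans ?_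
    exact mul_le_mul_of_nonneg_left ih (l1C_nonneg _)


lemma l1C_toC (p : AddMonoidAlgebra ℝ ℤ) (hp : ∀ m, 0 ≤ lcoeff p m) :
    l1C (toC p) = ev1 p := by
  have hsupp : (toC p).coeff.support ⊆ p.coeff.support := Finsupp.support_mapRange (hf := Complex.ofReal_zero)
  rw [l1C_eq]
  rw [Finset.sum_subset hsupp (fun x _ hx => by
    simp [Finsupp.notMem_support_iff.mp hx])]
  rw [ev1, Finsupp.sum]
  refine Finset.sum_congr rfl fun a _ => ?_
  have : (toC p).coeff a = ((p.coeff a : ℝ) : ℂ) := by simp [toC, lcoeff, AddMonoidAlgebra.coeff_ofCoeff]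
  rw [this, Complex.norm_real, Real.norm_eq_abs]
  exact abs_of_nonneg (hp a)


lemma ev1_nonneg (p : AddMonoidAlgebra ℝ ℤ) (hp : ∀ m, 0 ≤ lcoeff p m) : 0 ≤ ev1 p := by
  rw [ev1, Finsupp.sum]
  exact Finset.sum_nonneg fun a _ => hp a


lemma char_norm_one {H : Type} [CommGroup H] [Fintype H] (α : H →* ℂ) (g : H) :
    ‖α g‖ = 1 := by
  have h : (α g) ^ Fintype.card H = 1 := by
    rw [← map_pow, pow_card_eq_one, map_one]
  have h2 : ‖α g‖ ^ Fintype.card H = 1 := by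
    rw [← norm_pow, h, norm_one]
  have hc : Fintype.card H ≠ 0 := Fintype.card_ne_zero
  by_contra hne
  rcases lt_or_gt_of_ne hne with hlt | hgt
  · have := pow_lt_one₀ (norm_nonneg (α g)) hlt hc
    rw [h2] at this; exact lt_irrefl 1 this
  · have := one_lt_pow₀ hgt hc
    rw [h2] at this; exact lt_irrefl 1 this


lemma norm_add_lt_two {u v : ℂ} (hu : ‖u‖ = 1) (hv : ‖v‖ = 1) (huv : u ≠ v) :
    ‖u + v‖ < 2 := by
  have hpar := parallelogram_law_with_norm ℝ u v
  have h1 : 0 < ‖u - v‖ := by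
    rw [norm_pos_iff]; exact sub_ne_zero.mpr huv
  have : ‖u + v‖ ^ 2 < 2 ^ 2 := by
    rw [sq, sq]; nlinarith [norm_nonneg (u + v)]
  exact lt_of_pow_lt_pow_left₀ 2 (by norm_num) this


lemma char_inv_ne {H : Type} [CommGroup H] [Fintype H] (α β : H →* ℂ) (k : H)
    (h : α k ≠ β k) : α k⁻¹ ≠ β k⁻¹ := by
  intro he
  apply h
  have h1 : α k * α k⁻¹ = 1 := by rw [← map_mul, mul_inv_cancel, map_one]
  have h2 : β k * β k⁻¹ = 1 := by rw [← map_mul, mul_inv_cancel, map_one]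
  calc α k = α k * (β k⁻¹ * β k) := by rw [mul_comm (β k⁻¹), h2]; ring
  _ = (α k * α k⁻¹) * β k := by rw [he]; ring
  _ = β k := by rw [h1, one_mul]


open scoped Classical in
open scoped Classical in
lemma factor_bound {H : Type} [CommGroup H] [Fintype H]
    (α β : H →* ℂ) (Q : H → AddMonoidAlgebra ℝ ℤ)
    (hpos : ∀ g m, 0 ≤ lcoeff (Q g) m) (hsum : ∑ g, ev1 (Q g) = 1)
    (ε : ℝ)
    (hεk : ∀ k : H, α k ≠ β k → ‖α k⁻¹ + β k⁻¹‖ / 2 ≤ 1 - ε) :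
    l1C ((∑ g, α g⁻¹ • toC (Q g)) * (∑ g, β g⁻¹ • toC (Q g)))
      ≤ 1 - ε * ∑ g, ∑ h,
          (if α (g * h⁻¹) ≠ β (g * h⁻¹) then ev1 (Q g) * ev1 (Q h) else 0) := by
  set R : H → AddMonoidAlgebra ℂ ℤ := fun g => toC (Q g) with hR
  set P : AddMonoidAlgebra ℂ ℤ := (∑ g, α g⁻¹ • R g) * (∑ g, β g⁻¹ • R g) with hP
  have hstep : P = ∑ g, ∑ h, (α g⁻¹ * β h⁻¹) • (R g * R h) := by
    rw [hP, Finset.sum_mul_sum]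
    exact Finset.sum_congr rfl fun g _ => Finset.sum_congr rfl fun h _ =>
      smul_mul_smul_comm _ _ _ _
  have hswap : ∑ g, ∑ h, ((α g⁻¹ * β h⁻¹) • (R g * R h))
      = ∑ g, ∑ h, (α h⁻¹ * β g⁻¹) • (R g * R h) := by
    rw [Finset.sum_comm]
    exact Finset.sum_congr rfl fun g _ => Finset.sum_congr rfl fun h _ => by
      rw [mul_comm (R g) (R h)]
  have hPP : P + P = ∑ g, ∑ h, (α g⁻¹ * β h⁻¹ + α h⁻¹ * β g⁻¹) • (R g * R h) := by
    rw [hstep]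
    nth_rewrite 2 [hswap]
    rw [← Finset.sum_add_distrib]
    refine Finset.sum_congr rfl fun g _ => ?_
    rw [← Finset.sum_add_distrib]
    exact Finset.sum_congr rfl fun h _ => (add_smul _ _ _).symm
  have hhalf : P = (2⁻¹ : ℂ) • (P + P) := by
    rw [← two_smul ℂ P, smul_smul]
    norm_num
  have hmain : l1C P ≤ ∑ g, ∑ h,
      (‖α g⁻¹ * β h⁻¹ + α h⁻¹ * β g⁻¹‖ / 2) * (ev1 (Q g) * ev1 (Q h)) := by
    calc l1C P ≤ ‖(2⁻¹ : ℂ)‖ * l1C (P + P) := by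
          nth_rewrite 1 [hhalf]; exact l1C_smul _ _
    _ = 2⁻¹ * l1C (P + P) := by norm_num
    _ ≤ 2⁻¹ * ∑ g, ∑ h, ‖α g⁻¹ * β h⁻¹ + α h⁻¹ * β g⁻¹‖ * (ev1 (Q g) * ev1 (Q h)) := by
        refine mul_le_mul_of_nonneg_left ?_ (by norm_num)
        rw [hPP]
        refine (l1C_sum_le _ _).trans ?_
        refine Finset.sum_le_sum fun g _ => ?_
        refine (l1C_sum_le _ _).trans ?_
        refine Finset.sum_le_sum fun h _ => ?_
        refine (l1C_smul _ _).trans ?_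
        refine mul_le_mul_of_nonneg_left ?_ (norm_nonneg _)
        refine (l1C_mul_le _ _).trans ?_
        rw [hR]
        rw [l1C_toC _ (hpos g), l1C_toC _ (hpos h)]
    _ = _ := by
        rw [Finset.mul_sum]
        refine Finset.sum_congr rfl fun g _ => ?_
        rw [Finset.mul_sum]
        exact Finset.sum_congr rfl fun h _ => by ring
  have hcoef : ∀ g h : H, ‖α g⁻¹ * β h⁻¹ + α h⁻¹ * β g⁻¹‖
      = ‖α (g * h⁻¹)⁻¹ + β (g * h⁻¹)⁻¹‖ := by
    intro g h
    have e1 : α g⁻¹ = α h⁻¹ * α (g * h⁻¹)⁻¹ := by rw [← map_mul]; congr 1; group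
    have e2 : β g⁻¹ = β h⁻¹ * β (g * h⁻¹)⁻¹ := by rw [← map_mul]; congr 1; group
    have : α g⁻¹ * β h⁻¹ + α h⁻¹ * β g⁻¹
        = (α h⁻¹ * β h⁻¹) * (α (g * h⁻¹)⁻¹ + β (g * h⁻¹)⁻¹) := by
      rw [e1, e2]; ring
    rw [this, norm_mul, norm_mul, char_norm_one, char_norm_one, one_mul, one_mul]
  have hterm : ∀ g h : H,
      (‖α g⁻¹ * β h⁻¹ + α h⁻¹ * β g⁻¹‖ / 2) * (ev1 (Q g) * ev1 (Q h))
      ≤ ev1 (Q g) * ev1 (Q h)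
        - ε * (if α (g * h⁻¹) ≠ β (g * h⁻¹) then ev1 (Q g) * ev1 (Q h) else 0) := by
    intro g h
    have hev : 0 ≤ ev1 (Q g) * ev1 (Q h) :=
      mul_nonneg (ev1_nonneg _ (hpos g)) (ev1_nonneg _ (hpos h))
    rw [hcoef g h]
    split_ifs with hc
    · have := hεk _ hc
      nlinarith
    · have : ‖α (g * h⁻¹)⁻¹ + β (g * h⁻¹)⁻¹‖ ≤ 2 := by
        refine (norm_add_le _ _).trans ?_
        rw [char_norm_one, char_norm_one]; norm_num
      nlinarith
  calc l1C P ≤ _ := hmain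
  _ ≤ ∑ g, ∑ h, (ev1 (Q g) * ev1 (Q h)
        - ε * (if α (g * h⁻¹) ≠ β (g * h⁻¹) then ev1 (Q g) * ev1 (Q h) else 0)) :=
      Finset.sum_le_sum fun g _ => Finset.sum_le_sum fun h _ => hterm g h
  _ = 1 - ε * ∑ g, ∑ h,
        (if α (g * h⁻¹) ≠ β (g * h⁻¹) then ev1 (Q g) * ev1 (Q h) else 0) := by
      simp only [Finset.sum_sub_distrib, ← Finset.mul_sum]
      simp only [hsum, mul_one]


open scoped Classical in
/-- Lemma 1.2: for an ergodic sequence of hemicirculant matrices (here encoded by their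
coefficient families `q j : H → ℝ[x,x⁻¹]`), for unequal characters `α ≠ β` the `l¹` norms
of products `∏_{j=j₀}^{j₀+d} p_{α,j} p_{β,j}` of eigenvalue polynomials tend to `0`. -/
theorem ergodic_eigenvalue_products_tendsto_zero {H : Type} [CommGroup H] [Fintype H]
    (q : ℕ → H → AddMonoidAlgebra ℝ ℤ)
    (hpos : ∀ j g m, 0 ≤ lcoeff (q j g) m)
    (hsum : ∀ j, ∑ g, ev1 (q j g) = 1)
    (herg : ∀ α β : H →* ℂ, α ≠ β →
      ¬ Summable (fun j => ∑ g, ∑ h,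
        if α (g * h⁻¹) ≠ β (g * h⁻¹) then ev1 (q j g) * ev1 (q j h) else 0)) :
    ∀ α β : H →* ℂ, α ≠ β → ∀ j₀ : ℕ,
      Tendsto
        (fun d => l1C (∏ j ∈ Finset.Icc j₀ (j₀ + d),
          ((∑ g, α g⁻¹ • toC (q j g)) * (∑ g, β g⁻¹ • toC (q j g)))))
        atTop (nhds 0) := by
  intro α β hab j₀
  set S : ℕ → ℝ := fun j => ∑ g, ∑ h,
    if α (g * h⁻¹) ≠ β (g * h⁻¹) then ev1 (q j g) * ev1 (q j h) else 0 with hS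
  have hS0 : ∀ j, 0 ≤ S j := by
    intro j
    refine Finset.sum_nonneg fun g _ => Finset.sum_nonneg fun h _ => ?_
    split_ifs
    · exact mul_nonneg (ev1_nonneg _ (hpos j g)) (ev1_nonneg _ (hpos j h))
    · exact le_refl 0
  have hS1 : ∀ j, S j ≤ 1 := by
    intro j
    have : S j ≤ ∑ g, ∑ h, ev1 (q j g) * ev1 (q j h) := by
      refine Finset.sum_le_sum fun g _ => Finset.sum_le_sum fun h _ => ?_
      split_ifs
      · exact le_refl _
      · exact mul_nonneg (ev1_nonneg _ (hpos j g)) (ev1_nonneg _ (hpos j h))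
    refine this.trans ?_
    simp only [← Finset.mul_sum, hsum j, mul_one]
    exact le_refl 1
  -- epsilon
  obtain ⟨k₀, hk₀⟩ : ∃ k : H, α k ≠ β k := by
    by_contra hc
    push_neg at hc
    exact hab (MonoidHom.ext hc)
  set T : Finset H := Finset.univ.filter (fun k => α k ≠ β k) with hT
  have hTne : T.Nonempty := ⟨k₀, by simp [hT, hk₀]⟩
  set ε : ℝ := T.inf' hTne (fun k => 1 - ‖α k⁻¹ + β k⁻¹‖ / 2) with hε
  have hεpos : 0 < ε := by
    rw [hε, Finset.lt_inf'_iff]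
    intro k hk
    have hk' : α k ≠ β k := by simpa [hT] using hk
    have := norm_add_lt_two (char_norm_one α k⁻¹) (char_norm_one β k⁻¹)
      (char_inv_ne α β k hk')
    linarith
  have hεk : ∀ k : H, α k ≠ β k → ‖α k⁻¹ + β k⁻¹‖ / 2 ≤ 1 - ε := by
    intro k hk
    have : ε ≤ 1 - ‖α k⁻¹ + β k⁻¹‖ / 2 :=
      Finset.inf'_le _ (by simp [hT, hk])
    linarith
  have hε1 : ε ≤ 1 := by
    have : ε ≤ 1 - ‖α k₀⁻¹ + β k₀⁻¹‖ / 2 := Finset.inf'_le _ (by simp [hT, hk₀])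
    have h0 : 0 ≤ ‖α k₀⁻¹ + β k₀⁻¹‖ := norm_nonneg _
    linarith
  -- per-factor bound
  have hfac : ∀ j, l1C ((∑ g, α g⁻¹ • toC (q j g)) * (∑ g, β g⁻¹ • toC (q j g)))
      ≤ 1 - ε * S j := fun j =>
    factor_bound α β (q j) (hpos j) (hsum j) ε hεk
  -- chain
  have hchain : ∀ d, l1C (∏ j ∈ Finset.Icc j₀ (j₀ + d),
      ((∑ g, α g⁻¹ • toC (q j g)) * (∑ g, β g⁻¹ • toC (q j g))))
      ≤ Real.exp (-(ε * ∑ j ∈ Finset.Icc j₀ (j₀ + d), S j)) := by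
    intro d
    refine (l1C_prod_le _ _).trans ?_
    have h1 : ∏ j ∈ Finset.Icc j₀ (j₀ + d),
        l1C ((∑ g, α g⁻¹ • toC (q j g)) * (∑ g, β g⁻¹ • toC (q j g)))
        ≤ ∏ j ∈ Finset.Icc j₀ (j₀ + d), (1 - ε * S j) := by
      refine Finset.prod_le_prod (fun j _ => l1C_nonneg _) (fun j _ => hfac j)
    refine h1.trans ?_
    have h2 : ∏ j ∈ Finset.Icc j₀ (j₀ + d), (1 - ε * S j)
        ≤ ∏ j ∈ Finset.Icc j₀ (j₀ + d), Real.exp (-(ε * S j)) := by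
      refine Finset.prod_le_prod (fun j _ => ?_) (fun j _ => ?_)
      · have : ε * S j ≤ 1 := mul_le_one₀ hε1 (hS0 j) (hS1 j)
        linarith
      · have := Real.add_one_le_exp (-(ε * S j))
        linarith
    refine h2.trans ?_
    rw [← Real.exp_sum, Finset.sum_neg_distrib, Finset.mul_sum]
  -- divergence
  have hns : ¬ Summable (fun i => S (j₀ + i)) := by
    intro hs
    apply herg α β hab
    rw [← summable_nat_add_iff j₀]
    exact hs.congr fun i => by rw [add_comm]
  have hTend : Tendsto (fun d => ∑ j ∈ Finset.Icc j₀ (j₀ + d), S j) atTop atTop := by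
    have h1 := (not_summable_iff_tendsto_nat_atTop_of_nonneg (fun i => hS0 (j₀ + i))).mp hns
    have h2 : ∀ d, ∑ j ∈ Finset.Icc j₀ (j₀ + d), S j
        = ∑ i ∈ Finset.range (d + 1), S (j₀ + i) := by
      intro d
      rw [show Finset.Icc j₀ (j₀ + d)
          = (Finset.range (d + 1)).map ⟨(j₀ + ·), add_right_injective j₀⟩ from by
        ext x
        simp only [Finset.mem_Icc, Finset.mem_map, Finset.mem_range,
          Function.Embedding.coeFn_mk]
        constructor
        · intro hx; exact ⟨x - j₀, by omega, by omega⟩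
        · rintro ⟨i, hi, rfl⟩; omega]
      rw [Finset.sum_map]
      rfl
    simp only [h2]
    exact h1.comp (tendsto_add_atTop_nat 1)
  refine squeeze_zero (fun d => l1C_nonneg _) hchain ?_
  have h3 : Tendsto (fun d => -(ε * ∑ j ∈ Finset.Icc j₀ (j₀ + d), S j)) atTop atBot :=
    tendsto_neg_atTop_atBot.comp (hTend.const_mul_atTop hεpos)
  exact Real.tendsto_exp_atBot.comp h3
end

section
/- Let a be a positive integer, let b : I → ℕ and c : J → ℕ be finite families of positive integers with J nonempty of odd cardinality, and suppose a + Σ_{i∈I} b_i = Σ_{j∈J} c_j. Then ‖(1 + x^a) · ∏_{i∈I}(1 + x^{b_i}) · ∏_{j∈J}(1 − x^{c_j})‖₁ ≤ 2^{1 + |I| + |J|} − 2. -/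
open Polynomial

/-- The `l¹` norm of a real polynomial: the sum of the absolute values of its
coefficients. -/
noncomputable def pl1 (p : Polynomial ℝ) : ℝ := ∑ m ∈ p.support, |p.coeff m|

lemma pl1_eq_sum (p : Polynomial ℝ) {s : Finset ℕ} (h : p.support ⊆ s) :
    pl1 p = ∑ m ∈ s, |p.coeff m| := by
  rw [pl1]
  exact Finset.sum_subset h (fun x _ hx => by
    simp [Polynomial.notMem_support_iff.mp hx])

lemma pl1_nonneg (p : Polynomial ℝ) : 0 ≤ pl1 p :=
  Finset.sum_nonneg fun _ _ => abs_nonneg _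

lemma pl1_add_le (p q : Polynomial ℝ) : pl1 (p + q) ≤ pl1 p + pl1 q := by
  rw [pl1_eq_sum (p + q) (Polynomial.support_add),
      pl1_eq_sum p (Finset.subset_union_left),
      pl1_eq_sum q (Finset.subset_union_right),
      ← Finset.sum_add_distrib]
  exact Finset.sum_le_sum fun m _ => by
    simpa using abs_add_le (p.coeff m) (q.coeff m)

lemma pl1_neg (p : Polynomial ℝ) : pl1 (-p) = pl1 p := by
  simp [pl1, Polynomial.support_neg]

lemma pl1_one : pl1 (1 : Polynomial ℝ) = 1 := by
  have h : (1 : Polynomial ℝ).support = {0} := by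
    rw [← Polynomial.C_1, Polynomial.support_C (by norm_num)]
  simp [pl1, h]

lemma pl1_mul_X_pow (p : Polynomial ℝ) (e : ℕ) : pl1 (p * X ^ e) = pl1 p := by
  have hsub : (p * X ^ e).support ⊆ p.support.image (· + e) := by
    intro m hm
    rw [Polynomial.mem_support_iff, Polynomial.coeff_mul_X_pow'] at hm
    by_cases h : e ≤ m
    · simp only [h, if_true] at hm
      exact Finset.mem_image.mpr ⟨m - e, Polynomial.mem_support_iff.mpr hm, by omega⟩
    · simp [h] at hm
  rw [pl1_eq_sum _ hsub, Finset.sum_image (by intro x _ y _ h; simp only at h; omega)]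
  apply Finset.sum_congr rfl
  intro m _
  rw [Polynomial.coeff_mul_X_pow', if_pos (Nat.le_add_left e m)]
  simp

lemma pl1_one_add_mul (e : ℕ) (p : Polynomial ℝ) :
    pl1 ((1 + X ^ e) * p) ≤ 2 * pl1 p := by
  have h : (1 + X ^ e) * p = p + p * X ^ e := by ring
  rw [h]
  calc pl1 (p + p * X ^ e) ≤ pl1 p + pl1 (p * X ^ e) := pl1_add_le _ _
    _ = 2 * pl1 p := by rw [pl1_mul_X_pow]; ring

lemma pl1_one_sub_mul (e : ℕ) (p : Polynomial ℝ) :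
    pl1 ((1 - X ^ e) * p) ≤ 2 * pl1 p := by
  have h : (1 - X ^ e) * p = p + -(p * X ^ e) := by ring
  rw [h]
  calc pl1 (p + -(p * X ^ e)) ≤ pl1 p + pl1 (-(p * X ^ e)) := pl1_add_le _ _
    _ = 2 * pl1 p := by rw [pl1_neg, pl1_mul_X_pow]; ring

lemma pl1_prod_mul {ι : Type} (s : Finset ι) (f : ι → Polynomial ℝ)
    (hf : ∀ i, ∀ p, pl1 (f i * p) ≤ 2 * pl1 p) (p : Polynomial ℝ) :
    pl1 ((∏ i ∈ s, f i) * p) ≤ 2 ^ s.card * pl1 p := by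
  classical
  induction s using Finset.cons_induction with
  | empty => simp
  | cons a s ha ih =>
    rw [Finset.prod_cons, mul_assoc, Finset.card_cons, pow_succ]
    calc pl1 (f a * ((∏ i ∈ s, f i) * p)) ≤ 2 * pl1 ((∏ i ∈ s, f i) * p) := hf a _
      _ ≤ 2 * (2 ^ s.card * pl1 p) := by linarith
      _ = 2 ^ s.card * 2 * pl1 p := by ring

lemma pl1_prod_le {ι : Type} (s : Finset ι) (f : ι → Polynomial ℝ)
    (hf : ∀ i, ∀ p, pl1 (f i * p) ≤ 2 * pl1 p) :
    pl1 (∏ i ∈ s, f i) ≤ 2 ^ s.card := by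
  have := pl1_prod_mul s f hf 1
  rwa [mul_one, pl1_one, mul_one] at this

lemma pl1_prod_add_sub_top {ι : Type} (s : Finset ι) (f : ι → ℕ) :
    pl1 ((∏ i ∈ s, (1 + X ^ f i)) - X ^ (∑ i ∈ s, f i)) ≤ 2 ^ s.card - 1 := by
  classical
  induction s using Finset.cons_induction with
  | empty => norm_num [pl1]
  | cons a s ha ih =>
    have key : (∏ i ∈ Finset.cons a s ha, (1 + X ^ f i)) -
        (X : Polynomial ℝ) ^ (∑ i ∈ Finset.cons a s ha, f i)
        = (∏ i ∈ s, (1 + X ^ f i)) +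
          ((∏ i ∈ s, (1 + X ^ f i)) - X ^ (∑ i ∈ s, f i)) * X ^ f a := by
      rw [Finset.prod_cons, Finset.sum_cons, pow_add]
      ring
    rw [key, Finset.card_cons, pow_succ]
    have h1 : pl1 (∏ i ∈ s, (1 + X ^ f i)) ≤ 2 ^ s.card :=
      pl1_prod_le s _ (fun i p => pl1_one_add_mul (f i) p)
    calc pl1 _ ≤ pl1 (∏ i ∈ s, (1 + X ^ f i)) +
          pl1 (((∏ i ∈ s, (1 + X ^ f i)) - X ^ (∑ i ∈ s, f i)) * X ^ f a) :=
        pl1_add_le _ _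
      _ = pl1 (∏ i ∈ s, (1 + X ^ f i)) +
          pl1 ((∏ i ∈ s, (1 + X ^ f i)) - X ^ (∑ i ∈ s, f i)) := by
        rw [pl1_mul_X_pow]
      _ ≤ 2 ^ s.card * 2 - 1 := by linarith

lemma pl1_prod_sub_sub_top {ι : Type} (s : Finset ι) (f : ι → ℕ) :
    pl1 ((∏ i ∈ s, (1 - X ^ f i)) - (-1) ^ s.card * X ^ (∑ i ∈ s, f i))
      ≤ 2 ^ s.card - 1 := by
  classical
  induction s using Finset.cons_induction with
  | empty => norm_num [pl1]
  | cons a s ha ih =>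
    have key : (∏ i ∈ Finset.cons a s ha, (1 - X ^ f i)) -
        (-1) ^ (Finset.cons a s ha).card * (X : Polynomial ℝ) ^ (∑ i ∈ Finset.cons a s ha, f i)
        = (∏ i ∈ s, (1 - X ^ f i)) +
          -(((∏ i ∈ s, (1 - X ^ f i)) - (-1) ^ s.card * X ^ (∑ i ∈ s, f i)) * X ^ f a) := by
      rw [Finset.prod_cons, Finset.sum_cons, Finset.card_cons, pow_add, pow_succ]
      ring
    rw [key, Finset.card_cons, pow_succ]
    have h1 : pl1 (∏ i ∈ s, (1 - X ^ f i)) ≤ 2 ^ s.card :=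
      pl1_prod_le s _ (fun i p => pl1_one_sub_mul (f i) p)
    calc pl1 _ ≤ pl1 (∏ i ∈ s, (1 - X ^ f i)) +
          pl1 (-(((∏ i ∈ s, (1 - X ^ f i)) - (-1) ^ s.card * X ^ (∑ i ∈ s, f i)) * X ^ f a)) :=
        pl1_add_le _ _
      _ = pl1 (∏ i ∈ s, (1 - X ^ f i)) +
          pl1 ((∏ i ∈ s, (1 - X ^ f i)) - (-1) ^ s.card * X ^ (∑ i ∈ s, f i)) := by
        rw [pl1_neg, pl1_mul_X_pow]
      _ ≤ 2 ^ s.card * 2 - 1 := by linarith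

lemma pl1_prod_add_sub_one {ι : Type} (s : Finset ι) (f : ι → ℕ) :
    pl1 ((∏ i ∈ s, (1 + X ^ f i)) - 1) ≤ 2 ^ s.card - 1 := by
  classical
  induction s using Finset.cons_induction with
  | empty => norm_num [pl1]
  | cons a s ha ih =>
    have key : (∏ i ∈ Finset.cons a s ha, (1 + X ^ f i)) - (1 : Polynomial ℝ)
        = ((∏ i ∈ s, (1 + X ^ f i)) - 1) + (∏ i ∈ s, (1 + X ^ f i)) * X ^ f a := by
      rw [Finset.prod_cons]; ring
    rw [key, Finset.card_cons, pow_succ]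
    have h1 : pl1 (∏ i ∈ s, (1 + X ^ f i)) ≤ 2 ^ s.card :=
      pl1_prod_le s _ (fun i p => pl1_one_add_mul (f i) p)
    calc pl1 _ ≤ pl1 ((∏ i ∈ s, (1 + X ^ f i)) - 1) +
          pl1 ((∏ i ∈ s, (1 + X ^ f i)) * X ^ f a) := pl1_add_le _ _
      _ = pl1 ((∏ i ∈ s, (1 + X ^ f i)) - 1) + pl1 (∏ i ∈ s, (1 + X ^ f i)) := by
        rw [pl1_mul_X_pow]
      _ ≤ 2 ^ s.card * 2 - 1 := by linarith

lemma pl1_prod_sub_sub_one {ι : Type} (s : Finset ι) (f : ι → ℕ) :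
    pl1 ((∏ i ∈ s, (1 - X ^ f i)) - 1) ≤ 2 ^ s.card - 1 := by
  classical
  induction s using Finset.cons_induction with
  | empty => norm_num [pl1]
  | cons a s ha ih =>
    have key : (∏ i ∈ Finset.cons a s ha, (1 - X ^ f i)) - (1 : Polynomial ℝ)
        = ((∏ i ∈ s, (1 - X ^ f i)) - 1) + -((∏ i ∈ s, (1 - X ^ f i)) * X ^ f a) := by
      rw [Finset.prod_cons]; ring
    rw [key, Finset.card_cons, pow_succ]
    have h1 : pl1 (∏ i ∈ s, (1 - X ^ f i)) ≤ 2 ^ s.card :=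
      pl1_prod_le s _ (fun i p => pl1_one_sub_mul (f i) p)
    calc pl1 _ ≤ pl1 ((∏ i ∈ s, (1 - X ^ f i)) - 1) +
          pl1 (-((∏ i ∈ s, (1 - X ^ f i)) * X ^ f a)) := pl1_add_le _ _
      _ = pl1 ((∏ i ∈ s, (1 - X ^ f i)) - 1) + pl1 (∏ i ∈ s, (1 - X ^ f i)) := by
        rw [pl1_neg, pl1_mul_X_pow]
      _ ≤ 2 ^ s.card * 2 - 1 := by linarith

/-- The single-relation cancellation estimate from the proof of Proposition 2.8: if
`a + ∑ b_i = ∑ c_j` with `a`, the `b_i` and the `c_j` positive and `|J|` odd (and `J`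
nonempty), then `‖(1+x^a)·∏(1+x^{b_i})·∏(1−x^{c_j})‖₁ ≤ 2^{1+|I|+|J|} − 2`. -/
theorem single_relation_cancellation {I J : Type} [Fintype I] [Fintype J] [Nonempty J]
    (a : ℕ) (ha : 0 < a) (b : I → ℕ) (hb : ∀ i, 0 < b i) (c : J → ℕ) (hc : ∀ j, 0 < c j)
    (hodd : Odd (Fintype.card J))
    (hrel : a + ∑ i, b i = ∑ j, c j) :
    pl1 ((1 + X ^ a) * (∏ i, (1 + X ^ b i)) * ∏ j, (1 - X ^ c j))
      ≤ 2 ^ (1 + Fintype.card I + Fintype.card J) - 2 := by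
  classical
  set A : Polynomial ℝ := ∏ i, (1 + X ^ b i) with hA
  set C : Polynomial ℝ := ∏ j, (1 - X ^ c j) with hC
  set cI := Fintype.card I
  set cJ := Fintype.card J
  have hcI : (Finset.univ : Finset I).card = cI := Finset.card_univ
  have hcJ : (Finset.univ : Finset J).card = cJ := Finset.card_univ
  -- the key decomposition
  have hX : (X : Polynomial ℝ) ^ (∑ j, c j) = X ^ (a + ∑ i, b i) := by rw [hrel]
  have key : (1 + X ^ a) * A * C
      = (A * C + X ^ (∑ j, c j)) +
        (X ^ a * ((A - X ^ (∑ i, b i)) * C) + X ^ (a + ∑ i, b i) * (C - 1)) := by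
    rw [hX, pow_add]; ring
  rw [key]
  -- piece 1 : A*C + X^Σc
  have hCU : pl1 (C + X ^ (∑ j, c j)) ≤ 2 ^ cJ - 1 := by
    have := pl1_prod_sub_sub_top (Finset.univ : Finset J) c
    rw [hcJ, Odd.neg_one_pow hodd] at this
    simpa [hC, sub_neg_eq_add] using this
  have hA1 : pl1 (A - 1) ≤ 2 ^ cI - 1 := by
    have := pl1_prod_add_sub_one (Finset.univ : Finset I) b
    rwa [hcI] at this
  have hAmul : ∀ p, pl1 (A * p) ≤ 2 ^ cI * pl1 p := by
    intro p
    have := pl1_prod_mul (Finset.univ : Finset I) (fun i => 1 + X ^ b i)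
      (fun i p => pl1_one_add_mul (b i) p) p
    rwa [hcI] at this
  have hCmul : ∀ p, pl1 (C * p) ≤ 2 ^ cJ * pl1 p := by
    intro p
    have := pl1_prod_mul (Finset.univ : Finset J) (fun j => 1 - X ^ c j)
      (fun j p => pl1_one_sub_mul (c j) p) p
    rwa [hcJ] at this
  have h1 : pl1 (A * C + X ^ (∑ j, c j)) ≤ 2 ^ cI * (2 ^ cJ - 1) + (2 ^ cI - 1) := by
    have hdec : A * C + (X : Polynomial ℝ) ^ (∑ j, c j)
        = A * (C + X ^ (∑ j, c j)) + -((A - 1) * X ^ (∑ j, c j)) := by ring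
    rw [hdec]
    calc pl1 _ ≤ pl1 (A * (C + X ^ (∑ j, c j))) + pl1 (-((A - 1) * X ^ (∑ j, c j))) :=
        pl1_add_le _ _
      _ = pl1 (A * (C + X ^ (∑ j, c j))) + pl1 (A - 1) := by rw [pl1_neg, pl1_mul_X_pow]
      _ ≤ 2 ^ cI * (2 ^ cJ - 1) + (2 ^ cI - 1) := by
        have := hAmul (C + X ^ (∑ j, c j))
        have h2 : (0:ℝ) < 2 ^ cI := by positivity
        nlinarith [hCU, pl1_nonneg (C + X ^ (∑ j, c j))]
  -- piece 2 : X^a * ((A - X^Σb) * C)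
  have hAT : pl1 (A - X ^ (∑ i, b i)) ≤ 2 ^ cI - 1 := by
    have := pl1_prod_add_sub_top (Finset.univ : Finset I) b
    rwa [hcI] at this
  have h2 : pl1 (X ^ a * ((A - X ^ (∑ i, b i)) * C)) ≤ 2 ^ cJ * (2 ^ cI - 1) := by
    rw [mul_comm ((X : Polynomial ℝ) ^ a), pl1_mul_X_pow, mul_comm (A - X ^ (∑ i, b i))]
    have := hCmul (A - X ^ (∑ i, b i))
    have h2 : (0:ℝ) < 2 ^ cJ := by positivity
    nlinarith [hAT, pl1_nonneg (A - X ^ (∑ i, b i))]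
  -- piece 3 : X^(a+Σb) * (C - 1)
  have hC1 : pl1 (C - 1) ≤ 2 ^ cJ - 1 := by
    have := pl1_prod_sub_sub_one (Finset.univ : Finset J) c
    rwa [hcJ] at this
  have h3 : pl1 (X ^ (a + ∑ i, b i) * (C - 1)) ≤ 2 ^ cJ - 1 := by
    rw [mul_comm, pl1_mul_X_pow]; exact hC1
  calc pl1 _ ≤ pl1 (A * C + X ^ (∑ j, c j)) +
        pl1 (X ^ a * ((A - X ^ (∑ i, b i)) * C) + X ^ (a + ∑ i, b i) * (C - 1)) :=
      pl1_add_le _ _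
    _ ≤ pl1 (A * C + X ^ (∑ j, c j)) +
        (pl1 (X ^ a * ((A - X ^ (∑ i, b i)) * C)) + pl1 (X ^ (a + ∑ i, b i) * (C - 1))) := by
      have := pl1_add_le (X ^ a * ((A - X ^ (∑ i, b i)) * C)) (X ^ (a + ∑ i, b i) * (C - 1))
      linarith
    _ ≤ (2 ^ cI * (2 ^ cJ - 1) + (2 ^ cI - 1)) + (2 ^ cJ * (2 ^ cI - 1) + (2 ^ cJ - 1)) := by
      linarith
    _ = 2 ^ (1 + cI + cJ) - 2 := by
      rw [pow_add, pow_add, pow_one]; ring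
end
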